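/- Let Q be a convex subset of a normed vector space E, let f : E → ℝ be convex and differentiable on Q with ν-Hölder continuous gradient, i.e. ‖∇f(x) − ∇f(y)‖_* ≤ M_ν‖x−y‖^ν for all x,y ∈ Q, where ν ∈ [0,1] and M_ν < ∞. Then for every δ > 0 and L ≥ [((1−ν)/(1+ν))·(1/(2δ))]^((1−ν)/(1+ν)) · M_ν^(2/(1+ν)), one has f(y) ≤ f(x) + ⟨∇f(x), y−x⟩ + (L/2)‖x−y‖² + δ for all x, y ∈ Q. -/

import Mathlib

open RealInnerProductSpace Filter Topology

private lemma sum_rpow_le {ν : ℝ} (hν : 0 ≤ ν) (n : ℕ) :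
    ∑ k ∈ Finset.range n, ((k:ℝ)+1) ^ ν ≤ ((n:ℝ)+1) ^ (1+ν) / (1+ν) := by
  have h1ν : (0:ℝ) < 1 + ν := by linarith
  have step : ∀ k ∈ Finset.range n, ((k:ℝ)+1) ^ ν ≤
      ((((k+1):ℕ):ℝ)+1) ^ (1+ν) / (1+ν) - (((k:ℕ):ℝ)+1) ^ (1+ν) / (1+ν) := by
    intro k _
    set c : ℝ := (k:ℝ) + 1 with hc
    have hc1 : (1:ℝ) ≤ c := by
      have : (0:ℝ) ≤ (k:ℝ) := Nat.cast_nonneg k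
      rw [hc]; linarith
    have hc0 : (0:ℝ) < c := lt_of_lt_of_le one_pos hc1
    have hbern : 1 + (1+ν) * (1/c) ≤ (1 + 1/c) ^ (1+ν) := by
      apply one_add_mul_self_le_rpow_one_add
      · have : (0:ℝ) ≤ 1/c := by positivity
        linarith
      · linarith
    have hsplit : (c + 1) ^ (1+ν) = c ^ (1+ν) * (1 + 1/c) ^ (1+ν) := by
      rw [← Real.mul_rpow hc0.le (by positivity)]
      congr 1
      field_simp
    have hcpow : c ^ (1+ν) = c ^ ν * c := by
      rw [add_comm, Real.rpow_add_one hc0.ne']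
    have hge : c ^ (1+ν) + (1+ν) * c ^ ν ≤ (c + 1) ^ (1+ν) := by
      rw [hsplit]
      have h2 := mul_le_mul_of_nonneg_left hbern (Real.rpow_nonneg hc0.le (1+ν))
      calc c ^ (1+ν) + (1+ν) * c ^ ν
          = c ^ (1+ν) * (1 + (1+ν) * (1/c)) := by rw [hcpow]; field_simp
        _ ≤ c ^ (1+ν) * (1 + 1/c) ^ (1+ν) := h2
    have hcast : ((((k+1):ℕ):ℝ) + 1) = c + 1 := by rw [hc]; push_cast; ring
    rw [hcast, div_sub_div_same, le_div_iff₀ h1ν]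
    linarith
  calc ∑ k ∈ Finset.range n, ((k:ℝ)+1) ^ ν
      ≤ ∑ k ∈ Finset.range n,
        (((((k+1):ℕ):ℝ)+1) ^ (1+ν) / (1+ν) - (((k:ℕ):ℝ)+1) ^ (1+ν) / (1+ν)) :=
        Finset.sum_le_sum step
    _ = (((n:ℕ):ℝ)+1) ^ (1+ν) / (1+ν) - (((0:ℕ):ℝ)+1) ^ (1+ν) / (1+ν) :=
        Finset.sum_range_sub (fun k => (((k:ℕ):ℝ)+1) ^ (1+ν) / (1+ν)) n
    _ ≤ ((n:ℝ)+1) ^ (1+ν) / (1+ν) := by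
        have h3 : (0:ℝ) ≤ (((0:ℕ):ℝ)+1) ^ (1+ν) / (1+ν) := by positivity
        linarith

private lemma descent_bound {E : Type*} [NormedAddCommGroup E] [InnerProductSpace ℝ E]
    {Q : Set E} (hQ : Convex ℝ Q) {f : E → ℝ} {g : E → E} {ν M : ℝ}
    (hν0 : 0 ≤ ν) (hM : 0 ≤ M)
    (hconv : ∀ x ∈ Q, ∀ y ∈ Q, f x + ⟪g x, y - x⟫ ≤ f y)
    (hHolder : ∀ x ∈ Q, ∀ y ∈ Q, ‖g x - g y‖ ≤ M * ‖x - y‖ ^ ν)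
    {x y : E} (hx : x ∈ Q) (hy : y ∈ Q) :
    f y - f x - ⟪g x, y - x⟫ ≤ M / (1 + ν) * ‖y - x‖ ^ (1 + ν) := by
  have h1ν : (0:ℝ) < 1 + ν := by linarith
  by_cases hxy : y = x
  · subst hxy
    simp [Real.zero_rpow h1ν.ne']
  have hr0 : (0:ℝ) < ‖y - x‖ := by
    rw [norm_pos_iff]; exact sub_ne_zero_of_ne hxy
  set r : ℝ := ‖y - x‖ with hrdef
  have key : ∀ n : ℕ, 1 ≤ n → f y - f x - ⟪g x, y - x⟫ ≤
      M * r ^ (1+ν) / (1+ν) * ((1 + ((n:ℝ))⁻¹) ^ (1+ν)) := by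
    intro n hn
    have hn0 : (0:ℝ) < (n:ℝ) := Nat.cast_pos.mpr hn
    set z : ℕ → E := fun k => x + ((k:ℝ)/(n:ℝ)) • (y - x) with hz
    have hzQ : ∀ k, k ≤ n → z k ∈ Q := by
      intro k hk
      have ht0 : (0:ℝ) ≤ (k:ℝ)/(n:ℝ) := by positivity
      have ht1 : (k:ℝ)/(n:ℝ) ≤ 1 := by
        rw [div_le_one hn0]; exact_mod_cast hk
      have hzk : z k = (1 - (k:ℝ)/(n:ℝ)) • x + ((k:ℝ)/(n:ℝ)) • y := by
        simp only [hz]; module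
      rw [hzk]
      exact hQ hx hy (by linarith) ht0 (by ring)
    have hz0 : z 0 = x := by simp [hz]
    have hzn : z n = y := by
      simp only [hz, div_self hn0.ne', one_smul]
      abel
    have step : ∀ k, k < n → f (z (k+1)) - f (z k) ≤
        ⟪g (z (k+1)) - g x, ((n:ℝ))⁻¹ • (y - x)⟫ + ⟪g x, ((n:ℝ))⁻¹ • (y - x)⟫ := by
      intro k hk
      have h1 := hconv (z (k+1)) (hzQ (k+1) hk) (z k) (hzQ k (le_of_lt hk))
      have hdz : z k - z (k+1) = -(((n:ℝ))⁻¹ • (y - x)) := by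
        have hnne : ((n:ℝ)) ≠ 0 := hn0.ne'
        simp only [hz]
        match_scalars <;> (push_cast; field_simp; try ring)
      rw [hdz, inner_neg_right] at h1
      have h2 : ⟪g (z (k+1)), ((n:ℝ))⁻¹ • (y - x)⟫ =
          ⟪g (z (k+1)) - g x, ((n:ℝ))⁻¹ • (y - x)⟫ + ⟪g x, ((n:ℝ))⁻¹ • (y - x)⟫ := by
        rw [inner_sub_left]; ring
      linarith [h2 ▸ h1]
    have tele : ∑ k ∈ Finset.range n, (f (z (k+1)) - f (z k)) = f y - f x := by
      rw [Finset.sum_range_sub (fun k => f (z k)) n, hz0, hzn]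
    have hsum : f y - f x ≤ ∑ k ∈ Finset.range n,
        (⟪g (z (k+1)) - g x, ((n:ℝ))⁻¹ • (y - x)⟫ + ⟪g x, ((n:ℝ))⁻¹ • (y - x)⟫) := by
      rw [← tele]
      exact Finset.sum_le_sum (fun k hk => step k (Finset.mem_range.mp hk))
    have sum1 : ∑ k ∈ Finset.range n, ⟪g x, ((n:ℝ))⁻¹ • (y - x)⟫ = ⟪g x, y - x⟫ := by
      rw [Finset.sum_const, Finset.card_range, real_inner_smul_right, nsmul_eq_mul]
      field_simp
    have hgap : f y - f x - ⟪g x, y - x⟫ ≤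
        ∑ k ∈ Finset.range n, ⟪g (z (k+1)) - g x, ((n:ℝ))⁻¹ • (y - x)⟫ := by
      rw [Finset.sum_add_distrib, sum1] at hsum
      linarith
    have term : ∀ k ∈ Finset.range n, ⟪g (z (k+1)) - g x, ((n:ℝ))⁻¹ • (y - x)⟫ ≤
        M * r ^ (1+ν) / ((n:ℝ) ^ (1+ν)) * (((k:ℝ)+1) ^ ν) := by
      intro k hk
      have hzd : z (k+1) - x = (((k:ℝ)+1)/(n:ℝ)) • (y - x) := by
        simp only [hz]
        match_scalars <;> (push_cast; try field_simp) <;> try ring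
      have hnorm : ‖z (k+1) - x‖ = (((k:ℝ)+1)/(n:ℝ)) * r := by
        rw [hzd, norm_smul, Real.norm_eq_abs, abs_of_nonneg (by positivity)]
      have hH := hHolder (z (k+1)) (hzQ (k+1) (Finset.mem_range.mp hk)) x hx
      rw [hnorm] at hH
      calc ⟪g (z (k+1)) - g x, ((n:ℝ))⁻¹ • (y - x)⟫
          ≤ ‖g (z (k+1)) - g x‖ * ‖((n:ℝ))⁻¹ • (y - x)‖ := real_inner_le_norm _ _
        _ ≤ (M * ((((k:ℝ)+1)/(n:ℝ)) * r) ^ ν) * (((n:ℝ))⁻¹ * r) := by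
            rw [norm_smul, Real.norm_eq_abs, abs_of_nonneg (by positivity)]
            exact mul_le_mul_of_nonneg_right hH (by positivity)
        _ = M * r ^ (1+ν) / ((n:ℝ) ^ (1+ν)) * (((k:ℝ)+1) ^ ν) := by
            rw [Real.mul_rpow (by positivity) hr0.le,
              Real.div_rpow (by positivity) hn0.le,
              show r ^ (1+ν) = r ^ ν * r by rw [add_comm, Real.rpow_add_one hr0.ne'],
              show (n:ℝ) ^ (1+ν) = (n:ℝ) ^ ν * (n:ℝ) by
                rw [add_comm, Real.rpow_add_one hn0.ne']]
            have h5 : (0:ℝ) < (n:ℝ) ^ ν := Real.rpow_pos_of_pos hn0 _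
            field_simp
    have hb : f y - f x - ⟪g x, y - x⟫ ≤
        M * r ^ (1+ν) / ((n:ℝ) ^ (1+ν)) * (((n:ℝ)+1) ^ (1+ν) / (1+ν)) := by
      calc f y - f x - ⟪g x, y - x⟫
          ≤ ∑ k ∈ Finset.range n, ⟪g (z (k+1)) - g x, ((n:ℝ))⁻¹ • (y - x)⟫ := hgap
        _ ≤ ∑ k ∈ Finset.range n, M * r ^ (1+ν) / ((n:ℝ) ^ (1+ν)) * (((k:ℝ)+1) ^ ν) :=
            Finset.sum_le_sum term
        _ = M * r ^ (1+ν) / ((n:ℝ) ^ (1+ν)) * ∑ k ∈ Finset.range n, ((k:ℝ)+1) ^ ν := by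
            rw [Finset.mul_sum]
        _ ≤ M * r ^ (1+ν) / ((n:ℝ) ^ (1+ν)) * (((n:ℝ)+1) ^ (1+ν) / (1+ν)) := by
            apply mul_le_mul_of_nonneg_left (sum_rpow_le hν0 n) (by positivity)
    have hfin : M * r ^ (1+ν) / ((n:ℝ) ^ (1+ν)) * (((n:ℝ)+1) ^ (1+ν) / (1+ν)) =
        M * r ^ (1+ν) / (1+ν) * ((1 + ((n:ℝ))⁻¹) ^ (1+ν)) := by
      have e7 : (1 + ((n:ℝ))⁻¹) ^ (1+ν) = ((n:ℝ)+1) ^ (1+ν) / ((n:ℝ)) ^ (1+ν) := by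
        rw [← Real.div_rpow (by positivity) hn0.le]
        congr 1
        field_simp
      rw [e7]
      ring
    rw [← hfin]
    exact hb
  -- take the limit n → ∞
  have h1 : Tendsto (fun n : ℕ => 1 + ((n:ℝ))⁻¹) atTop (𝓝 1) := by
    have h0 : Tendsto (fun n : ℕ => (1:ℝ) + ((n:ℝ))⁻¹) atTop (𝓝 (1 + 0)) :=
      tendsto_const_nhds.add tendsto_inv_atTop_nhds_zero_nat
    simpa using h0
  have h2 := h1.rpow_const (Or.inr h1ν.le)
  rw [Real.one_rpow] at h2
  have h3 := h2.const_mul (M * r ^ (1+ν) / (1+ν))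
  rw [mul_one] at h3
  have h5 := ge_of_tendsto h3 (eventually_atTop.mpr ⟨1, fun n hn => key n hn⟩)
  have h4 : M * r ^ (1+ν) / (1+ν) = M / (1+ν) * r ^ (1+ν) := by ring
  linarith
private lemma youngB {ν M δ L r : ℝ} (hν0 : 0 ≤ ν) (hν1 : ν ≤ 1) (hM : 0 < M) (hδ : 0 < δ)
    (hr : 0 ≤ r)
    (hL : L ≥ ((1 - ν) / (1 + ν) * (1 / (2 * δ))) ^ ((1 - ν) / (1 + ν)) * M ^ (2 / (1 + ν))) :
    M / (1 + ν) * r ^ (1 + ν) ≤ L / 2 * r ^ 2 + δ := by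
  have h1ν : (0:ℝ) < 1 + ν := by linarith
  rcases eq_or_lt_of_le hν1 with h | h
  · -- ν = 1
    subst h
    norm_num at hL ⊢
    nlinarith [sq_nonneg r]
  · -- ν < 1
    have h1ν' : (0:ℝ) < 1 - ν := by linarith
    set p : ℝ := 2 / (1 + ν) with hp
    set q : ℝ := 2 / (1 - ν) with hq
    have hq0 : 0 < q := by positivity
    have hpq : p.HolderConjugate q := by
      rw [Real.holderConjugate_iff]
      constructor
      · rw [hp, lt_div_iff₀ h1ν]; linarith
      · rw [hp, hq]; field_simp; ring
    set C : ℝ := (1 - ν) / (1 + ν) * (1 / (2 * δ)) with hC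
    have hCpos : 0 < C := by positivity
    have hL0 : 0 < L := lt_of_lt_of_le (by positivity) hL
    set K : ℝ := L / (1 + ν) with hK
    have hK0 : 0 < K := by positivity
    set a : ℝ := K ^ ((1 + ν)/2) * r ^ (1 + ν) with ha
    set b : ℝ := M / ((1 + ν) * K ^ ((1 + ν)/2)) with hb
    have hKp : (0:ℝ) < K ^ ((1 + ν)/2) := Real.rpow_pos_of_pos hK0 _
    have ha0 : 0 ≤ a := by positivity
    have hb0 : 0 ≤ b := by positivity
    have hab : a * b = M / (1 + ν) * r ^ (1 + ν) := by
      rw [ha, hb]; field_simp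
    have young := Real.young_inequality_of_nonneg ha0 hb0 hpq
    rw [hab] at young
    have hqm1 : q - 1 = (1 + ν) / (1 - ν) := by rw [hq]; field_simp; ring
    have hqm1pos : 0 < q - 1 := by rw [hqm1]; positivity
    -- a^p/p = L/2 * r^2
    have e1 : (K ^ ((1+ν)/2)) ^ p = K := by
      rw [← Real.rpow_mul hK0.le, show (1+ν)/2 * p = 1 by rw [hp]; field_simp,
        Real.rpow_one]
    have e2 : (r ^ (1+ν)) ^ p = r ^ 2 := by
      rw [← Real.rpow_mul hr, show (1+ν) * p = ((2:ℕ):ℝ) by rw [hp]; push_cast; field_simp,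
        Real.rpow_natCast]
    have hap : a ^ p / p = L / 2 * r ^ 2 := by
      rw [ha, Real.mul_rpow hKp.le (Real.rpow_nonneg hr _), e1, e2, hp, hK]
      field_simp
    -- key consequence of hL
    have key : C * M ^ q ≤ L ^ (q-1) := by
      have h1 := Real.rpow_le_rpow (by positivity) hL hqm1pos.le
      calc C * M ^ q = (C ^ ((1-ν)/(1+ν)) * M ^ (2/(1+ν))) ^ (q-1) := by
            rw [Real.mul_rpow (by positivity) (by positivity), ← Real.rpow_mul hCpos.le,
              ← Real.rpow_mul hM.le,
              show (1-ν)/(1+ν) * (q-1) = 1 by rw [hqm1]; field_simp,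
              show (2/(1+ν)) * (q-1) = q by rw [hqm1, hq]; field_simp,
              Real.rpow_one]
        _ ≤ L ^ (q-1) := h1
    have hLq : 0 < L ^ (q-1) := Real.rpow_pos_of_pos hL0 _
    have e3 : b ^ q = M ^ q / ((1+ν) * L ^ (q-1)) := by
      rw [hb, Real.div_rpow hM.le (by positivity), Real.mul_rpow h1ν.le hKp.le,
        ← Real.rpow_mul hK0.le, show (1+ν)/2*q = q-1 by rw [hqm1, hq]; field_simp,
        hK, Real.div_rpow hL0.le h1ν.le,
        show (1+ν)^q = (1+ν)^(q-1) * (1+ν) by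
          rw [← Real.rpow_add_one h1ν.ne' (q-1)]; norm_num]
      have h4 : (0:ℝ) < (1+ν) ^ (q-1) := Real.rpow_pos_of_pos h1ν _
      field_simp
    have hbq : b ^ q / q ≤ δ := by
      rw [e3, div_le_iff₀ hq0, div_le_iff₀ (by positivity)]
      have : δ * q * ((1+ν) * L^(q-1)) = (1/C) * L^(q-1) := by
        rw [hC, hq]; field_simp
      rw [this]
      calc M ^ q = (C * M^q) / C := by field_simp
        _ ≤ L^(q-1) / C := by gcongr
        _ = 1/C * L^(q-1) := by ring
    linarith [young, hap.symm.le, hap.le]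

theorem holder_gradient_descent_lemma
    {E : Type*} [NormedAddCommGroup E] [InnerProductSpace ℝ E]
    (Q : Set E) (hQ : Convex ℝ Q) (f : E → ℝ) (g : E → E) (ν M : ℝ)
    (hν0 : 0 ≤ ν) (hν1 : ν ≤ 1) (hM : 0 < M)
    (hconv : ∀ x ∈ Q, ∀ y ∈ Q, f x + ⟪g x, y - x⟫ ≤ f y)
    (hHolder : ∀ x ∈ Q, ∀ y ∈ Q, ‖g x - g y‖ ≤ M * ‖x - y‖ ^ ν) :
    ∀ δ : ℝ, 0 < δ →
      ∀ L : ℝ,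
        L ≥ ((1 - ν) / (1 + ν) * (1 / (2 * δ))) ^ ((1 - ν) / (1 + ν)) * M ^ (2 / (1 + ν)) →
        ∀ x ∈ Q, ∀ y ∈ Q,
          f y ≤ f x + ⟪g x, y - x⟫ + L / 2 * ‖x - y‖ ^ 2 + δ := by
  intro δ hδ L hL x hx y hy
  have hA := descent_bound hQ hν0 hM.le hconv hHolder hx hy
  have hB := youngB hν0 hν1 hM hδ (norm_nonneg (y - x)) hL
  rw [norm_sub_rev x y]
  linarith
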